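/- Let Ω be a nonempty set and Σ : Ω × Ω → ℝ a symmetric function (Σ(P,Q) = Σ(Q,P)) with Σ(P,P) = 0 for all P. Then there exists an injective map f : Ω → EuclideanSpace ℝ (Fin n) with Σ(P,Q) = ½‖f(P) − f(Q)‖² for all P,Q ∈ Ω if and only if for every subset Ω' ⊆ Ω with at most n+3 points there exists an injective map f' : Ω' → EuclideanSpace ℝ (Fin n) with Σ(P,Q) = ½‖f'(P) − f'(Q)‖² for all P,Q ∈ Ω'. (Theorem 1, Menger's embedding criterion: a symmetric Σ-space is isometrically embeddable in n-dimensional proper Euclidean space iff every (n+2)th order Σ-subspace, i.e. every subset of n+3 points, is.) -/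
import Mathlib

open Submodule Finset
open scoped RealInnerProductSpace

section MengerHelpers

variable {F : Type*} [NormedAddCommGroup F] [InnerProductSpace ℝ F] {m : ℕ}

lemma menger_polar (x y z : F) :
    ⟪x - z, y - z⟫ = (‖x - z‖ ^ 2 + ‖y - z‖ ^ 2 - ‖x - y‖ ^ 2) / 2 := by
  have h : x - y = (x - z) - (y - z) := by abel
  have h2 : ‖x - y‖ ^ 2 = ‖x - z‖ ^ 2 - 2 * ⟪x - z, y - z⟫ + ‖y - z‖ ^ 2 := by
    rw [h, norm_sub_sq_real]
  rw [h2]; ring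

lemma menger_span_eq_zero (w : Fin m → F) (z : F)
    (hz : z ∈ span ℝ (Set.range w)) (h : ∀ i, ⟪z, w i⟫ = 0) : z = 0 := by
  obtain ⟨c, hc⟩ := (mem_span_range_iff_exists_fun ℝ).1 hz
  have hzz : ⟪z, z⟫ = 0 := by
    have h2 : ⟪∑ i, c i • w i, z⟫ = 0 := by
      rw [sum_inner]
      refine Finset.sum_eq_zero fun i _ => ?_
      rw [real_inner_smul_left, real_inner_comm, h i, mul_zero]
    rwa [hc] at h2
  exact inner_self_eq_zero.mp hzz

lemma menger_li_of_gram (v w : Fin m → F)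
    (hg : ∀ i j, ⟪v i, v j⟫ = ⟪w i, w j⟫)
    (hv : LinearIndependent ℝ v) : LinearIndependent ℝ w := by
  rw [Fintype.linearIndependent_iff] at hv ⊢
  intro c hc
  have key : ∑ i, c i • v i = 0 := by
    have h1 : ⟪∑ i, c i • v i, ∑ j, c j • v j⟫ = ⟪∑ i, c i • w i, ∑ j, c j • w j⟫ := by
      rw [sum_inner, sum_inner]
      refine Finset.sum_congr rfl fun i _ => ?_
      rw [real_inner_smul_left, real_inner_smul_left, inner_sum, inner_sum]
      congr 1
      refine Finset.sum_congr rfl fun j _ => ?_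
      rw [real_inner_smul_right, real_inner_smul_right, hg]
    rw [hc, inner_zero_right] at h1
    exact inner_self_eq_zero.mp h1
  exact hv c key

lemma menger_inner_transfer (v w : Fin m → F)
    (hg : ∀ i j, ⟪v i, v j⟫ = ⟪w i, w j⟫)
    {x x' y y' : F}
    (hx' : x' ∈ span ℝ (Set.range v)) (hy' : y' ∈ span ℝ (Set.range w))
    (hxy : ∀ i, ⟪x, v i⟫ = ⟪y, w i⟫)
    (hxy' : ∀ i, ⟪x', v i⟫ = ⟪y', w i⟫) :
    ⟪x, x'⟫ = ⟪y, y'⟫ := by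
  obtain ⟨c, hc⟩ := (mem_span_range_iff_exists_fun ℝ).1 hx'
  have hyeq : y' = ∑ j, c j • w j := by
    have h0 : (∑ j, c j • w j) - y' = 0 := by
      refine menger_span_eq_zero w _
        (sub_mem (sum_mem fun j _ => smul_mem _ _ (subset_span ⟨j, rfl⟩)) hy') fun i => ?_
      rw [inner_sub_left, sum_inner]
      have h1 : ∑ j, ⟪c j • w j, w i⟫ = ⟪x', v i⟫ := by
        rw [← hc, sum_inner]
        refine Finset.sum_congr rfl fun j _ => ?_
        rw [real_inner_smul_left, real_inner_smul_left, hg]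
      rw [h1, hxy' i, sub_self]
    exact (sub_eq_zero.mp h0).symm
  rw [← hc, hyeq, inner_sum, inner_sum]
  refine Finset.sum_congr rfl fun j _ => ?_
  rw [real_inner_smul_right, real_inner_smul_right, hxy j]

end MengerHelpers

/-- **Menger's embedding criterion** (Theorem 1).  A symmetric Σ-space `(Ω, W)` is
isometrically embeddable in the `n`-dimensional proper Euclidean space if and only if
every Σ-subspace of at most `n + 3` points is isometrically embeddable in it. -/
theorem menger_embedding_criterion
    (Ω : Type) [Nonempty Ω] (n : ℕ) (W : Ω → Ω → ℝ)
    (hsym : ∀ P Q, W P Q = W Q P) (hzero : ∀ P, W P P = 0) :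
    (∃ f : Ω → EuclideanSpace ℝ (Fin n), Function.Injective f ∧
        ∀ P Q : Ω, W P Q = (1 / 2) * ‖f P - f Q‖ ^ 2) ↔
      (∀ Ω' : Set Ω, Ω'.Finite → Ω'.ncard ≤ n + 3 →
        ∃ f' : Ω' → EuclideanSpace ℝ (Fin n), Function.Injective f' ∧
          ∀ P Q : Ω', W P Q = (1 / 2) * ‖f' P - f' Q‖ ^ 2) := by
  classical
  constructor
  · rintro ⟨f, hinj, hf⟩ Ω' _ _
    exact ⟨fun P => f P.1, fun P Q h => Subtype.ext (hinj h), fun P Q => hf P.1 Q.1⟩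
  intro H
  -- extract "unbundled" embeddings of finite subsets
  have getEmb : ∀ S : Set Ω, S.Finite → S.ncard ≤ n + 3 →
      ∃ f : Ω → EuclideanSpace ℝ (Fin n),
        ∀ P ∈ S, ∀ Q ∈ S, W P Q = (1 / 2) * ‖f P - f Q‖ ^ 2 := by
    intro S hfin hcard
    obtain ⟨f', -, hf'⟩ := H S hfin hcard
    refine ⟨fun P => if h : P ∈ S then f' ⟨P, h⟩ else 0, fun P hP Q hQ => ?_⟩
    simpa only [dif_pos hP, dif_pos hQ] using hf' ⟨P, hP⟩ ⟨Q, hQ⟩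
  -- distinct points have nonzero W
  have hWne : ∀ P Q : Ω, P ≠ Q → W P Q ≠ 0 := by
    intro P Q hne
    have hfin : ({P, Q} : Set Ω).Finite := (Set.finite_singleton Q).insert P
    have hcard : ({P, Q} : Set Ω).ncard ≤ n + 3 :=
      le_trans (Set.ncard_insert_le _ _) (by simp [Set.ncard_singleton])
    obtain ⟨f', hinj, hf'⟩ := H _ hfin hcard
    have hPm : P ∈ ({P, Q} : Set Ω) := by simp
    have hQm : Q ∈ ({P, Q} : Set Ω) := by simp
    have hfne : f' ⟨P, hPm⟩ - f' ⟨Q, hQm⟩ ≠ 0 := by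
      rw [sub_ne_zero]
      exact fun h => hne (congrArg Subtype.val (hinj h))
    rw [hf' ⟨P, hPm⟩ ⟨Q, hQm⟩]
    have : 0 < ‖f' ⟨P, hPm⟩ - f' ⟨Q, hQm⟩‖ := norm_pos_iff.mpr hfne
    positivity
  -- the set of sizes of "independent frames"
  set E := EuclideanSpace ℝ (Fin n) with hEdef
  let M : Set ℕ := {m | ∃ (a₀ : Ω) (a : Fin m → Ω) (f : Ω → E),
    (∀ P ∈ insert a₀ (Set.range a), ∀ Q ∈ insert a₀ (Set.range a),
        W P Q = (1 / 2) * ‖f P - f Q‖ ^ 2) ∧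
    LinearIndependent ℝ (fun i => f (a i) - f a₀)}
  have hM0 : 0 ∈ M := by
    obtain ⟨b⟩ := ‹Nonempty Ω›
    refine ⟨b, Fin.elim0, fun _ => 0, fun P hP Q hQ => ?_, linearIndependent_empty_type⟩
    have hP' : P = b := by simpa using hP
    have hQ' : Q = b := by simpa using hQ
    subst hP'; subst hQ'; simp [hzero]
  have hMle : ∀ m ∈ M, m ≤ n := by
    intro m hm
    obtain ⟨a₀, a, f, -, hli⟩ := hm
    have h2 : Fintype.card (Fin m) ≤ Module.finrank ℝ (EuclideanSpace ℝ (Fin n)) :=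
      hli.fintype_card_le_finrank
    simpa [finrank_euclideanSpace_fin] using h2
  have hMbdd : BddAbove M := ⟨n, hMle⟩
  set m := sSup M with hmdef
  have hmM : m ∈ M := Nat.sSup_mem ⟨0, hM0⟩ hMbdd
  have hmn : m ≤ n := hMle m hmM
  obtain ⟨a₀, a, g, hg, hgli⟩ := hmM
  set v : Fin m → E := fun i => g (a i) - g a₀ with hvdef
  -- inner products from embeddings
  have inner_emb : ∀ (f : Ω → E) (S : Set Ω),
      (∀ P ∈ S, ∀ Q ∈ S, W P Q = (1 / 2) * ‖f P - f Q‖ ^ 2) →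
      ∀ P ∈ S, ∀ Q ∈ S, ∀ R ∈ S,
        ⟪f P - f R, f Q - f R⟫ = W P R + W Q R - W P Q := by
    intro f S hf P hP Q hQ R hR
    rw [menger_polar, hf P hP R hR, hf Q hQ R hR, hf P hP Q hQ]
    ring
  have ha₀mem : a₀ ∈ insert a₀ (Set.range a) := Set.mem_insert _ _
  have hamem : ∀ i, a i ∈ insert a₀ (Set.range a) :=
    fun i => Set.mem_insert_of_mem _ ⟨i, rfl⟩
  have hvgram : ∀ i j, ⟪v i, v j⟫ = W (a i) a₀ + W (a j) a₀ - W (a i) (a j) :=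
    fun i j => inner_emb g _ hg (a i) (hamem i) (a j) (hamem j) a₀ ha₀mem
  have hrange : (Set.range a).ncard ≤ m := by
    rw [← Set.image_univ, ← Finset.coe_univ, ← Finset.coe_image, Set.ncard_coe_finset]
    exact Finset.card_image_le.trans (by simp)
  -- main per-pair construction
  have key : ∀ P Q : Ω, ∃ (w : Fin m → E) (y y' : E),
      (∀ i j, ⟪v i, v j⟫ = ⟪w i, w j⟫) ∧
      y ∈ Submodule.span ℝ (Set.range w) ∧ y' ∈ Submodule.span ℝ (Set.range w) ∧
      (∀ i, ⟪y, w i⟫ = W P a₀ + W (a i) a₀ - W P (a i)) ∧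
      (∀ i, ⟪y', w i⟫ = W Q a₀ + W (a i) a₀ - W Q (a i)) ∧
      ‖y - y'‖ ^ 2 = 2 * W P Q := by
    intro P Q
    set S : Set Ω := insert a₀ (insert P (insert Q (Set.range a))) with hSdef
    have hSfin : S.Finite := (((Set.finite_range a).insert Q).insert P).insert a₀
    have hScard : S.ncard ≤ n + 3 := by
      have h1 : S.ncard ≤ (insert P (insert Q (Set.range a))).ncard + 1 := by
        rw [hSdef]; exact Set.ncard_insert_le _ _
      have h2 := Set.ncard_insert_le P (insert Q (Set.range a))
      have h3 := Set.ncard_insert_le Q (Set.range a)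
      omega
    obtain ⟨f, hf⟩ := getEmb S hSfin hScard
    have ha₀S : a₀ ∈ S := Set.mem_insert _ _
    have haS : ∀ i, a i ∈ S := fun i => by
      exact Set.mem_insert_of_mem _ (Set.mem_insert_of_mem _ (Set.mem_insert_of_mem _ ⟨i, rfl⟩))
    have hPS : P ∈ S := Set.mem_insert_of_mem _ (Set.mem_insert _ _)
    have hQS : Q ∈ S := Set.mem_insert_of_mem _ (Set.mem_insert_of_mem _ (Set.mem_insert _ _))
    have hwgram : ∀ i j, ⟪v i, v j⟫ = ⟪f (a i) - f a₀, f (a j) - f a₀⟫ := fun i j => by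
      rw [hvgram i j]
      exact (inner_emb f S hf (a i) (haS i) (a j) (haS j) a₀ ha₀S).symm
    have hwli : LinearIndependent ℝ (fun i => f (a i) - f a₀) :=
      menger_li_of_gram v _ hwgram hgli
    have hspan : ∀ R, R ∈ S →
        f R - f a₀ ∈ Submodule.span ℝ (Set.range fun i => f (a i) - f a₀) := by
      intro R hR
      by_contra hnot
      have hcons : LinearIndependent ℝ
          (Fin.cons (f R - f a₀) (fun i => f (a i) - f a₀) : Fin (m + 1) → E) :=
        linearIndependent_fin_cons.mpr ⟨hwli, hnot⟩
      have hsub : insert a₀ (Set.range (Fin.cons R a : Fin (m + 1) → Ω)) ⊆ S := by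
        rw [Fin.range_cons]
        exact Set.insert_subset ha₀S (Set.insert_subset hR
          (fun x hx => by obtain ⟨i, rfl⟩ := hx; exact haS i))
      have hfc : (fun i : Fin (m + 1) => f ((Fin.cons R a : Fin (m + 1) → Ω) i) - f a₀) =
          Fin.cons (f R - f a₀) (fun i => f (a i) - f a₀) := by
        funext i
        exact Fin.cases (by simp) (fun j => by simp) i
      have hmem : m + 1 ∈ M := by
        refine ⟨a₀, Fin.cons R a, f, fun P' hP' Q' hQ' => hf P' (hsub hP') Q' (hsub hQ'), ?_⟩
        rw [hfc]; exact hcons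
      have := le_csSup hMbdd hmem
      omega
    refine ⟨fun i => f (a i) - f a₀, f P - f a₀, f Q - f a₀, hwgram,
      hspan P hPS, hspan Q hQS, ?_, ?_, ?_⟩
    · exact fun i => inner_emb f S hf P hPS (a i) (haS i) a₀ ha₀S
    · exact fun i => inner_emb f S hf Q hQS (a i) (haS i) a₀ ha₀S
    · rw [sub_sub_sub_cancel_right, hf P hPS Q hQS]; ring
  -- construct the coordinates of each point relative to the frame
  have exF : ∀ P : Ω, ∃ x : E, x ∈ Submodule.span ℝ (Set.range v) ∧
      ∀ i, ⟪x, v i⟫ = W P a₀ + W (a i) a₀ - W P (a i) := by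
    intro P
    obtain ⟨w, y, y', hgram, hy, -, hyi, -, -⟩ := key P P
    obtain ⟨c, hc⟩ := (mem_span_range_iff_exists_fun ℝ).1 hy
    refine ⟨∑ j, c j • v j,
      sum_mem fun j _ => smul_mem _ _ (subset_span ⟨j, rfl⟩), fun i => ?_⟩
    rw [sum_inner]
    have hterm : ∀ j ∈ Finset.univ, ⟪c j • v j, v i⟫ = ⟪c j • w j, w i⟫ := fun j _ => by
      rw [real_inner_smul_left, real_inner_smul_left, hgram]
    rw [Finset.sum_congr rfl hterm, ← sum_inner, hc, hyi]
  choose x hxspan hxinner using exF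
  have main : ∀ P Q : Ω, W P Q = (1 / 2) * ‖x P - x Q‖ ^ 2 := by
    intro P Q
    obtain ⟨w, y, y', hgram, hy, hy', hyi, hy'i, hnorm⟩ := key P Q
    have t1 : ⟪x P, x P⟫ = ⟪y, y⟫ :=
      menger_inner_transfer v w hgram (hxspan P) hy
        (fun i => (hxinner P i).trans (hyi i).symm)
        (fun i => (hxinner P i).trans (hyi i).symm)
    have t2 : ⟪x P, x Q⟫ = ⟪y, y'⟫ :=
      menger_inner_transfer v w hgram (hxspan Q) hy'
        (fun i => (hxinner P i).trans (hyi i).symm)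
        (fun i => (hxinner Q i).trans (hy'i i).symm)
    have t3 : ⟪x Q, x Q⟫ = ⟪y', y'⟫ :=
      menger_inner_transfer v w hgram (hxspan Q) hy'
        (fun i => (hxinner Q i).trans (hy'i i).symm)
        (fun i => (hxinner Q i).trans (hy'i i).symm)
    have hxx : ‖x P - x Q‖ ^ 2 = ‖y - y'‖ ^ 2 := by
      rw [← real_inner_self_eq_norm_sq, ← real_inner_self_eq_norm_sq,
        real_inner_sub_sub_self, real_inner_sub_sub_self, t1, t2, t3]
    rw [hxx, hnorm]; ring
  refine ⟨fun P => g a₀ + x P, fun P Q hPQ => ?_, fun P Q => by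
    simpa [add_sub_add_left_eq_sub] using main P Q⟩
  by_contra hne
  refine hWne P Q hne ?_
  have hx0 : x P - x Q = 0 := by
    have h2 : g a₀ + x P = g a₀ + x Q := hPQ
    rw [sub_eq_zero]
    exact add_left_cancel h2
  rw [main P Q, hx0]
  simp
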